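/- Fix x ∈ (0,1] and a fixed base N-parameter setup: let u ∈ Ω_{a}(x) with β̲(u) ≥ β_N > 1 and suppose a satisfies x β_N^n ≥ 2n² > max{β_N, 1/(β_N−1)} for all n ≥ a. Then for any q ≥ a and any w ∈ Ω_q(x) with w|_a = u, one has β̄(w)/(β̲(w))² < 1 and (β̄(w)/β̲(w))^{q+1} < 3. -/

import Mathlib

open MeasureTheory Set
open scoped Classical

/-- The beta-transformation `T_β x = βx - ⌊βx⌋`. -/
noncomputable def betaT (β x : ℝ) : ℝ := Int.fract (β * x)

/-- The `k`-th digit (0-indexed) of the β-expansion of `x`: `ε_{k+1}(x,β) = ⌊β T_β^k x⌋`. -/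
noncomputable def betaDigit (β x : ℝ) (k : ℕ) : ℕ := ⌊β * (betaT β)^[k] x⌋₊

/-- `Σ_n(β)`: admissible words of length `n`, i.e. prefixes of β-expansions of points of `[0,1)`. -/
def admWords (β : ℝ) (n : ℕ) : Set (Fin n → ℕ) :=
  {w | ∃ x ∈ Set.Ico (0:ℝ) 1, ∀ i : Fin n, w i = betaDigit β x i}

/-- The cylinder `𝔍(w)` of points of `[0,1)` whose β-expansion starts with `w`. -/
def cyl (β : ℝ) {n : ℕ} (w : Fin n → ℕ) : Set ℝ :=
  {x | x ∈ Set.Ico (0:ℝ) 1 ∧ ∀ i : Fin n, betaDigit β x i = w i}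

/-- `Ξ_n(β)`: admissible words of length `n` whose cylinder is full (of length `β^{-n}`). -/
def fullWords (β : ℝ) (n : ℕ) : Set (Fin n → ℕ) :=
  {w | w ∈ admWords β n ∧ volume (cyl β w) = ENNReal.ofReal (1 / β ^ n)}

/-- `ε(β)`: the β-expansion of 1 (0-indexed). -/
noncomputable def eps1 (β : ℝ) (k : ℕ) : ℕ := betaDigit β 1 k

/-- `ε*(β)`: the infinite β-expansion of 1.  If `ε(β)` has a last nonzero digit at
(0-indexed) position `N`, it is the periodic sequence `(ε_0 ⋯ ε_{N-1} (ε_N - 1))^∞`;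
otherwise it is `ε(β)` itself. -/

noncomputable def epsStar (β : ℝ) : ℕ → ℕ :=
  if h : ∃ N, eps1 β N ≠ 0 ∧ ∀ k, N < k → eps1 β k = 0 then
    fun k => if k % (h.choose + 1) = h.choose then eps1 β h.choose - 1
             else eps1 β (k % (h.choose + 1))
  else eps1 β

/-- Strict lexicographic order on sequences of nonnegative integers. -/
def lexLt (a b : ℕ → ℕ) : Prop := ∃ i, (∀ j, j < i → a j = b j) ∧ a i < b i

/-- Strict lexicographic order on words of length `n`. -/
def wordLt {n : ℕ} (a b : Fin n → ℕ) : Prop :=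
  ∃ i : Fin n, (∀ j, j < i → a j = b j) ∧ a i < b i

/-- `Ω_n(x)`: all length-`n` prefixes of β-expansions of `x` over all bases `β > 1`. -/
def prefWords (x : ℝ) (n : ℕ) : Set (Fin n → ℕ) :=
  {w | ∃ β : ℝ, 1 < β ∧ ∀ i : Fin n, w i = betaDigit β x i}

/-- The parameter cylinder `I(w) = {β > 1 : ε_1(x,β)⋯ε_n(x,β) = w}`. -/
def pcyl (x : ℝ) {n : ℕ} (w : Fin n → ℕ) : Set ℝ :=
  {β | 1 < β ∧ ∀ i : Fin n, betaDigit β x i = w i}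

/-- `Λ_n(x)`: words whose parameter cylinder is full, i.e. `{T_β^n x : β ∈ I(w)} = [0,1)`. -/
def pfull (x : ℝ) (n : ℕ) : Set (Fin n → ℕ) :=
  {w | w ∈ prefWords x n ∧ (fun β => (betaT β)^[n] x) '' pcyl x w = Set.Ico (0:ℝ) 1}



lemma betaT_iter_nonneg (β x : ℝ) (hx : 0 ≤ x) (k : ℕ) : 0 ≤ (betaT β)^[k] x := by
  cases k with
  | zero => simpa
  | succ n => rw [Function.iterate_succ_apply']; exact Int.fract_nonneg _

lemma betaT_iter_le_one (β x : ℝ) (hx : x ≤ 1) (k : ℕ) : (betaT β)^[k] x ≤ 1 := by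
  cases k with
  | zero => simpa
  | succ n => rw [Function.iterate_succ_apply']; exact (Int.fract_lt_one _).le

lemma betaT_step (β : ℝ) (hβ : 0 < β) (x : ℝ) (hx : 0 ≤ x) (k : ℕ) :
    β * (betaT β)^[k] x = (betaDigit β x k : ℝ) + (betaT β)^[k+1] x := by
  have h0 : 0 ≤ β * (betaT β)^[k] x := mul_nonneg hβ.le (betaT_iter_nonneg β x hx k)
  rw [Function.iterate_succ_apply', betaT, betaDigit, natCast_floor_eq_intCast_floor h0,
    Int.fract]
  ring

lemma beta_expand (β : ℝ) (hβ : 0 < β) (x : ℝ) (hx : 0 ≤ x) (q : ℕ) :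
    β ^ q * x = (∑ i ∈ Finset.range q, (betaDigit β x i : ℝ) * β ^ (q - 1 - i))
      + (betaT β)^[q] x := by
  induction q with
  | zero => simp
  | succ n ih =>
    have h1 : β ^ (n+1) * x = β * (β ^ n * x) := by ring
    rw [h1, ih, mul_add, Finset.mul_sum, betaT_step β hβ x hx n, Finset.sum_range_succ]
    have hterm : ∀ i ∈ Finset.range n,
        β * ((betaDigit β x i : ℝ) * β ^ (n - 1 - i)) = (betaDigit β x i : ℝ) * β ^ (n + 1 - 1 - i) := by
      intro i hi
      rw [Finset.mem_range] at hi
      have h2 : n + 1 - 1 - i = (n - 1 - i) + 1 := by omega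
      rw [h2, pow_succ]; ring
    rw [Finset.sum_congr rfl hterm]
    have : n + 1 - 1 - n = 0 := by omega
    rw [this]
    ring

lemma beta_expand_div (β : ℝ) (hβ : 0 < β) (x : ℝ) (hx : 0 ≤ x) (q : ℕ) :
    x = (∑ i ∈ Finset.range q, (betaDigit β x i : ℝ) / β ^ (i+1)) + (betaT β)^[q] x / β ^ q := by
  have hβq : (0:ℝ) < β ^ q := pow_pos hβ q
  have h := beta_expand β hβ x hx q
  have hterm : ∀ i ∈ Finset.range q,
      (betaDigit β x i : ℝ) * β ^ (q - 1 - i) / β ^ q = (betaDigit β x i : ℝ) / β ^ (i+1) := by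
    intro i hi
    rw [Finset.mem_range] at hi
    have h2 : q = (q - 1 - i) + (i + 1) := by omega
    rw [div_eq_div_iff hβq.ne' (pow_pos hβ _).ne']
    rw [mul_assoc, ← pow_add, ← h2]
  calc x = β ^ q * x / β ^ q := by field_simp
    _ = _ := by
        rw [h, add_div, Finset.sum_div, Finset.sum_congr rfl hterm]

lemma bern_two (t : ℝ) (ht0 : 0 ≤ t) (ht1 : t ≤ 1) (n : ℕ) (h : (n:ℝ) * t ≤ 1/2) :
    (1+t)^n ≤ 2 := by
  have h1 : (1:ℝ)/2 ≤ (1-t)^n := by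
    have hb := one_add_mul_le_pow (a := -t) (by linarith) n
    have hb' : 1 - (n:ℝ)*t ≤ (1-t)^n := by
      calc (1:ℝ) - (n:ℝ)*t = 1 + (n:ℝ)*(-t) := by ring
      _ ≤ (1 + -t)^n := hb
      _ = (1-t)^n := by rw [← sub_eq_add_neg]
    linarith
  have h2 : (1+t)^n * (1-t)^n ≤ 1 := by
    rw [← mul_pow]
    have he : (1+t)*(1-t) = 1 - t^2 := by ring
    rw [he]
    exact pow_le_one₀ (by nlinarith) (by nlinarith)
  nlinarith [pow_nonneg (by linarith : (0:ℝ) ≤ 1+t) n]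

lemma inv_pow_term_bound (β1 β2 : ℝ) (h1 : 0 < β1) (h12 : β1 ≤ β2) (k : ℕ) (hk : 1 ≤ k)
    (c : ℝ) (hc : 0 ≤ c) :
    c / β1 ^ k * ((β2 - β1) / β2) ≤ c / β1 ^ k - c / β2 ^ k := by
  have h2 : (0:ℝ) < β2 := lt_of_lt_of_le h1 h12
  set r : ℝ := β1 / β2 with hr
  have hr0 : 0 < r := div_pos h1 h2
  have hr1 : r ≤ 1 := (div_le_one h2).2 h12
  have hrk : r ^ k ≤ r := by
    calc r ^ k ≤ r ^ 1 := pow_le_pow_of_le_one hr0.le hr1 hk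
    _ = r := pow_one r
  have hβ2k : β2 ^ k = β1 ^ k / r ^ k := by
    rw [hr, div_pow]
    field_simp
  have hkey : c / β2 ^ k = c / β1 ^ k * r ^ k := by
    rw [hβ2k]
    field_simp
  have hs : (β2 - β1) / β2 = 1 - r := by rw [hr]; field_simp
  rw [hkey, hs]
  have hpos : 0 ≤ c / β1 ^ k := div_nonneg hc (pow_pos h1 k).le
  nlinarith

lemma pcyl_gap (x : ℝ) (hx0 : 0 < x) (hx1 : x ≤ 1) (q : ℕ) (hq : 1 ≤ q)
    (w : Fin q → ℕ) (β1 β2 : ℝ) (h1 : β1 ∈ pcyl x w) (h2 : β2 ∈ pcyl x w) (h12 : β1 ≤ β2) :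
    x * ((β2 - β1) / β2) ≤ 1 / β2 ^ q := by
  obtain ⟨hβ1, hd1⟩ := h1
  obtain ⟨hβ2, hd2⟩ := h2
  have hβ1' : (0:ℝ) < β1 := lt_trans one_pos hβ1
  have hβ2' : (0:ℝ) < β2 := lt_trans one_pos hβ2
  set t1 := (betaT β1)^[q] x
  set t2 := (betaT β2)^[q] x
  have ht1 : 0 ≤ t1 := betaT_iter_nonneg β1 x hx0.le q
  have ht2 : t2 ≤ 1 := betaT_iter_le_one β2 x hx1 q
  set S : ℝ → ℝ := fun β => ∑ i : Fin q, (w i : ℝ) / β ^ ((i:ℕ)+1) with hS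
  have hsum : ∀ β : ℝ, 0 < β → (∀ i : Fin q, betaDigit β x i = w i) →
      (∑ i ∈ Finset.range q, (betaDigit β x i : ℝ) / β ^ (i+1)) = S β := by
    intro β hβ hd
    rw [hS]
    rw [← Fin.sum_univ_eq_sum_range (fun i => (betaDigit β x i : ℝ) / β ^ (i+1))]
    exact Finset.sum_congr rfl (fun i _ => by rw [hd i])
  have hA : x = S β1 + t1 / β1 ^ q := by
    have := beta_expand_div β1 hβ1' x hx0.le q
    rwa [hsum β1 hβ1' hd1] at this
  have hB : x = S β2 + t2 / β2 ^ q := by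
    have := beta_expand_div β2 hβ2' x hx0.le q
    rwa [hsum β2 hβ2' hd2] at this
  set s : ℝ := (β2 - β1) / β2 with hs
  have hlow : x * s ≤ (S β1 + t1 / β1 ^ q) - (S β2 + t1 / β2 ^ q) := by
    have hterm : ∀ i : Fin q,
        (w i : ℝ) / β1 ^ ((i:ℕ)+1) * s ≤ (w i : ℝ) / β1 ^ ((i:ℕ)+1) - (w i : ℝ) / β2 ^ ((i:ℕ)+1) :=
      fun i => inv_pow_term_bound β1 β2 hβ1' h12 ((i:ℕ)+1) (Nat.le_add_left 1 _)
        (w i : ℝ) (Nat.cast_nonneg _)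
    have hsumle : S β1 * s ≤ S β1 - S β2 := by
      rw [hS, Finset.sum_mul, ← Finset.sum_sub_distrib]
      exact Finset.sum_le_sum (fun i _ => hterm i)
    have htail : t1 / β1 ^ q * s ≤ t1 / β1 ^ q - t1 / β2 ^ q :=
      inv_pow_term_bound β1 β2 hβ1' h12 q hq t1 ht1
    calc x * s = S β1 * s + t1 / β1 ^ q * s := by rw [hA]; ring
      _ ≤ (S β1 - S β2) + (t1 / β1 ^ q - t1 / β2 ^ q) := add_le_add hsumle htail
      _ = (S β1 + t1 / β1 ^ q) - (S β2 + t1 / β2 ^ q) := by ring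
  have hupp : (S β1 + t1 / β1 ^ q) - (S β2 + t1 / β2 ^ q) ≤ 1 / β2 ^ q := by
    have h' : S β1 + t1 / β1 ^ q = S β2 + t2 / β2 ^ q := by rw [← hA, hB]
    rw [h']
    have hbq : (0:ℝ) < β2 ^ q := pow_pos hβ2' q
    have heq : S β2 + t2 / β2 ^ q - (S β2 + t1 / β2 ^ q) = (t2 - t1) / β2 ^ q := by ring
    rw [heq]
    gcongr
    linarith
  linarith

set_option maxHeartbeats 2000000 in
theorem pcyl_ratio_bounds (x : ℝ) (hx : x ∈ Set.Ioc (0:ℝ) 1) (βN : ℝ) (hβN : 1 < βN)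
    (a : ℕ) (u : Fin a → ℕ) (hu : u ∈ prefWords x a)
    (hlow : βN ≤ sInf (pcyl x u))
    (ha : ∀ n : ℕ, a ≤ n → 2 * (n : ℝ) ^ 2 ≤ x * βN ^ n ∧
        max βN (1 / (βN - 1)) < 2 * (n : ℝ) ^ 2)
    (q : ℕ) (hq : a ≤ q) (w : Fin q → ℕ) (hw : w ∈ prefWords x q)
    (hpre : ∀ i : Fin a, w (Fin.castLE hq i) = u i) :
    sSup (pcyl x w) / (sInf (pcyl x w)) ^ 2 < 1 ∧
      (sSup (pcyl x w) / sInf (pcyl x w)) ^ (q + 1) < 3 := by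
  obtain ⟨hx0, hx1⟩ := hx
  have hhq := ha q hq
  have hq2 : 2*(q:ℝ)^2 ≤ x * βN ^ q := hhq.1
  have hβNq : βN < 2*(q:ℝ)^2 := lt_of_le_of_lt (le_max_left _ _) hhq.2
  have hq1 : 1 ≤ q := by
    by_contra h
    push_neg at h
    interval_cases q
    norm_num at hβNq
    linarith
  have hqR : (1:ℝ) ≤ (q:ℝ) := by exact_mod_cast hq1
  set c : ℝ := 2*(q:ℝ)^2 with hc
  have hc0 : (0:ℝ) < c := by nlinarith
  set t : ℝ := 1/c with ht
  have ht0 : 0 ≤ t := by positivity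
  have ht1 : t ≤ 1 := by
    rw [ht, div_le_one hc0]; nlinarith
  have hβN0 : (0:ℝ) < βN := lt_trans one_pos hβN
  -- βN > 1 + t
  have hβN_lb : 1 + t < βN := by
    by_contra hcon
    push_neg at hcon
    have hb : βN ^ q ≤ (1+t)^q := pow_le_pow_left₀ hβN0.le hcon q
    have hnt : (q:ℝ) * t ≤ 1/2 := by
      rw [ht, hc, mul_one_div, div_le_div_iff₀ (by nlinarith) two_pos]
      nlinarith
    have h2 : (1+t)^q ≤ 2 := bern_two t ht0 ht1 q hnt
    have h3 : x * βN ^ q ≤ βN ^ q := by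
      nlinarith [pow_pos hβN0 q]
    have h4 : 2*(q:ℝ)^2 ≤ 2 := by linarith
    have h5 : (q:ℝ) ≤ 1 := by nlinarith
    have hqe : q = 1 := le_antisymm (by exact_mod_cast h5) hq1
    subst hqe
    rw [ht, hc] at hcon
    norm_num at hcon hq2
    nlinarith
  -- the parameter cylinder
  have hne : (pcyl x w).Nonempty := by
    obtain ⟨β, hβgt, hβd⟩ := hw
    exact ⟨β, hβgt, fun i => (hβd i).symm⟩
  have hβlow : ∀ β ∈ pcyl x w, βN ≤ β := by
    intro β hβ
    refine le_trans hlow (csInf_le ⟨1, fun γ hγ => hγ.1.le⟩ ?_)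
    refine ⟨hβ.1, fun i => ?_⟩
    rw [← hpre i]
    simpa [Fin.coe_castLE] using hβ.2 (Fin.castLE hq i)
  have hgap : ∀ β1 ∈ pcyl x w, ∀ β2 ∈ pcyl x w, β2 ≤ β1 * (1 + t) := by
    intro β1 h1 β2 h2
    have hβ1p : (0:ℝ) < β1 := lt_trans one_pos h1.1
    have hβ2p : (0:ℝ) < β2 := lt_trans one_pos h2.1
    rcases le_total β1 β2 with h12 | h12
    · have hkey := pcyl_gap x hx0 hx1 q hq1 w β1 β2 h1 h2 h12
      have hb2q : (0:ℝ) < β2 ^ q := pow_pos hβ2p q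
      have hsplit2 : β2 ^ q = β2 * β2 ^ (q-1) := by
        rw [← pow_succ']
        congr 1
        omega
      have hsplit1 : β1 ^ q = β1 * β1 ^ (q-1) := by
        rw [← pow_succ']
        congr 1
        omega
      have e1 : x * ((β2-β1)/β2) * β2 ^ q = x*(β2-β1)*β2^(q-1) := by
        rw [hsplit2]; field_simp
      have s1 : x*(β2-β1)*β2^(q-1) ≤ 1 := by
        calc x*(β2-β1)*β2^(q-1) = x * ((β2-β1)/β2) * β2 ^ q := e1.symm
        _ ≤ (1/β2^q) * β2^q := mul_le_mul_of_nonneg_right hkey hb2q.le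
        _ = 1 := by field_simp
      have s2 : x*(β2-β1)*β1^(q-1) ≤ 1 := by
        refine le_trans ?_ s1
        have hx2 : 0 ≤ x*(β2-β1) := mul_nonneg hx0.le (by linarith)
        have : β1^(q-1) ≤ β2^(q-1) := pow_le_pow_left₀ hβ1p.le h12 _
        nlinarith [pow_pos hβ1p (q-1)]
      have s3 : c ≤ x * β1 * β1^(q-1) := by
        calc c ≤ x * βN ^ q := hq2
        _ ≤ x * β1 ^ q := by
            have : βN ^ q ≤ β1 ^ q := pow_le_pow_left₀ hβN0.le (hβlow β1 h1) q
            nlinarith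
        _ = x * β1 * β1^(q-1) := by rw [hsplit1]; ring
      have s4 : c * (β2 - β1) ≤ β1 := by
        calc c * (β2-β1) ≤ (x*β1*β1^(q-1))*(β2-β1) :=
              mul_le_mul_of_nonneg_right s3 (by linarith)
        _ = β1 * (x*(β2-β1)*β1^(q-1)) := by ring
        _ ≤ β1 * 1 := mul_le_mul_of_nonneg_left s2 hβ1p.le
        _ = β1 := mul_one _
      have s5 : β2 - β1 ≤ β1 / c := by
        rw [le_div_iff₀ hc0]; nlinarith
      have s6 : β1*(1+t) = β1 + β1/c := by
        rw [ht]; field_simp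
      linarith
    · nlinarith [mul_nonneg hβ1p.le ht0]
  have hbddb : BddBelow (pcyl x w) := ⟨1, fun β hβ => hβ.1.le⟩
  have hbdd : BddAbove (pcyl x w) := by
    obtain ⟨β0, hβ0⟩ := hne
    exact ⟨β0*(1+t), fun β hβ => hgap β0 hβ0 β hβ⟩
  have hmβ : βN ≤ sInf (pcyl x w) := le_csInf hne hβlow
  have hm0 : (0:ℝ) < sInf (pcyl x w) := lt_trans one_pos (lt_of_lt_of_le hβN hmβ)
  have hmM : sInf (pcyl x w) ≤ sSup (pcyl x w) := csInf_le_csSup hne hbddb hbdd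
  have h1t : (0:ℝ) < 1 + t := by linarith
  have hMm : sSup (pcyl x w) ≤ sInf (pcyl x w) * (1+t) := by
    apply csSup_le hne
    intro β2 h2
    have hd : β2 / (1+t) ≤ sInf (pcyl x w) := by
      refine le_csInf hne (fun β1 h1 => ?_)
      rw [div_le_iff₀ h1t]
      exact hgap β1 h1 β2 h2
    calc β2 = β2 / (1+t) * (1+t) := by field_simp
    _ ≤ sInf (pcyl x w) * (1+t) := mul_le_mul_of_nonneg_right hd h1t.le
  have hmlb : 1 + t < sInf (pcyl x w) := lt_of_lt_of_le hβN_lb hmβ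
  constructor
  · rw [div_lt_one (by positivity)]
    calc sSup (pcyl x w) ≤ sInf (pcyl x w) * (1+t) := hMm
    _ < sInf (pcyl x w) * sInf (pcyl x w) := by nlinarith
    _ = sInf (pcyl x w) ^ 2 := (sq _).symm
  · have h0 : 0 ≤ sSup (pcyl x w) / sInf (pcyl x w) :=
      div_nonneg (le_trans hm0.le hmM) hm0.le
    have hr : sSup (pcyl x w) / sInf (pcyl x w) ≤ 1 + t := by
      rw [div_le_iff₀ hm0]; linarith [hMm, mul_comm (sInf (pcyl x w)) (1+t)]
    have hstep : (sSup (pcyl x w) / sInf (pcyl x w)) ^ (q+1) ≤ (1+t)^(q+1) :=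
      pow_le_pow_left₀ h0 hr _
    refine lt_of_le_of_lt hstep ?_
    rcases eq_or_lt_of_le hq1 with hqe | hqgt
    · rw [ht, hc, ← hqe]
      norm_num
    · have hq2' : (2:ℝ) ≤ (q:ℝ) := by exact_mod_cast hqgt
      have hnt : ((q+1:ℕ):ℝ) * t ≤ 1/2 := by
        rw [ht, hc, mul_one_div, div_le_div_iff₀ (by nlinarith) two_pos]
        push_cast
        nlinarith
      have := bern_two t ht0 ht1 (q+1) hnt
      linarith
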